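/- arXiv:0707.3959 — 4 statements merged into one kernel-verified Lean document; each statement's English description precedes it below -/
import Mathlib

section
/- A linear space-time block code X = Σ_{l=1}^{L} c_l C_l with real symbols c_l and complex dispersion matrices C_l is Γ-group decodable (i.e., the ML decoding metric ‖Y − XH‖_F² decouples into a sum of Γ independent submetrics, each involving only the symbols of one group) if and only if C_p† C_q + C_q† C_p = 0 for all indices p, q belonging to different groups. -/
open Matrix Finset

section StbcAux

/-- Re of trace is symmetric under swapping with conjugate transpose. -/
private lemma re_trace_conj {T N : ℕ} (A B : Matrix (Fin T) (Fin N) ℂ) :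
    (Matrix.trace (Bᴴ * A)).re = (Matrix.trace (Aᴴ * B)).re := by
  have h : Bᴴ * A = (Aᴴ * B)ᴴ := by simp [Matrix.conjTranspose_mul]
  rw [h, Matrix.trace_conjTranspose]; simp

/-- Expansion of the ML metric as constant + linear + quadratic parts. -/
private lemma stbc_expand {T N L : ℕ} (Y : Matrix (Fin T) (Fin N) ℂ)
    (D : Fin L → Matrix (Fin T) (Fin N) ℂ) (c : Fin L → ℝ) :
    (Matrix.trace ((Y - ∑ l, c l • D l)ᴴ * (Y - ∑ l, c l • D l))).re
      = (Matrix.trace (Yᴴ * Y)).re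
        - 2 * ∑ l, c l * (Matrix.trace (Yᴴ * D l)).re
        + ∑ p, ∑ q, c p * c q * (Matrix.trace ((D p)ᴴ * D q)).re := by
  set S : Matrix (Fin T) (Fin N) ℂ := ∑ l, c l • D l with hS
  have e1 : (Y - S)ᴴ * (Y - S) = Yᴴ * Y - Yᴴ * S - Sᴴ * Y + Sᴴ * S := by
    rw [Matrix.conjTranspose_sub, Matrix.sub_mul, Matrix.mul_sub, Matrix.mul_sub]
    abel
  rw [e1]
  have e2 : (Matrix.trace (Sᴴ * Y)).re = (Matrix.trace (Yᴴ * S)).re := re_trace_conj Y S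
  have e3 : (Matrix.trace (Yᴴ * S)).re = ∑ l, c l * (Matrix.trace (Yᴴ * D l)).re := by
    rw [hS, Matrix.mul_sum, Matrix.trace_sum]
    simp [Matrix.mul_smul, Complex.real_smul, Complex.mul_re]
  have e4 : (Matrix.trace (Sᴴ * S)).re
      = ∑ p, ∑ q, c p * c q * (Matrix.trace ((D p)ᴴ * D q)).re := by
    rw [hS, Matrix.conjTranspose_sum]
    simp only [Matrix.conjTranspose_smul, star_trivial]
    rw [Matrix.sum_mul, Matrix.trace_sum]
    rw [Complex.re_sum]
    refine Finset.sum_congr rfl fun p _ => ?_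
    rw [Matrix.smul_mul, Matrix.mul_sum, Matrix.trace_smul, Matrix.trace_sum]
    simp [Matrix.mul_smul, smul_smul, Complex.real_smul, Complex.mul_re,
      Finset.mul_sum, mul_assoc]
  simp only [Matrix.trace_add, Matrix.trace_sub, Complex.add_re, Complex.sub_re, e2, e3, e4]
  ring

private lemma gsum_single2 {n : ℕ} {R : Type*} [CommRing R] (j k : Fin n) (a b : R)
    (t : Fin n → R) :
    ∑ x, (Pi.single j a + Pi.single k b : Fin n → R) x * t x = a * t j + b * t k := by
  simp [Pi.single_apply, add_mul, ite_mul, Finset.sum_add_distrib, Finset.sum_ite_eq']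

private lemma gsum_single1 {n : ℕ} {R : Type*} [CommRing R] (j : Fin n) (a : R)
    (t : Fin n → R) :
    ∑ x, (Pi.single j a : Fin n → R) x * t x = a * t j := by
  simp [Pi.single_apply, ite_mul, Finset.sum_ite_eq']

private lemma rquad_eval1 {n : ℕ} (β : Fin n → Fin n → ℝ) (p : Fin n) :
    ∑ x, ∑ y, (Pi.single p 1 : Fin n → ℝ) x * (Pi.single p 1 : Fin n → ℝ) y * β x y
      = β p p := by
  have inner : ∀ x, ∑ y, (Pi.single p 1 : Fin n → ℝ) x * (Pi.single p 1 : Fin n → ℝ) y * β x y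
      = (Pi.single p 1 : Fin n → ℝ) x * β x p := by
    intro x
    rw [show (∑ y, (Pi.single p 1 : Fin n → ℝ) x * (Pi.single p 1 : Fin n → ℝ) y * β x y)
        = ∑ y, (Pi.single p 1 : Fin n → ℝ) y * ((Pi.single p 1 : Fin n → ℝ) x * β x y) from
      Finset.sum_congr rfl fun y _ => by ring]
    rw [gsum_single1 p 1 _]; ring
  simp only [inner]
  rw [gsum_single1 p 1 (fun x => β x p)]; ring

private lemma rquad_eval2 {n : ℕ} (β : Fin n → Fin n → ℝ) (p q : Fin n) :
    ∑ x, ∑ y, (Pi.single p 1 + Pi.single q 1 : Fin n → ℝ) x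
        * (Pi.single p 1 + Pi.single q 1 : Fin n → ℝ) y * β x y
      = β p p + β p q + β q p + β q q := by
  set c : Fin n → ℝ := Pi.single p 1 + Pi.single q 1 with hc
  have inner : ∀ x, ∑ y, c x * c y * β x y = c x * (β x p + β x q) := by
    intro x
    rw [show (∑ y, c x * c y * β x y) = ∑ y, c y * (c x * β x y) from
      Finset.sum_congr rfl fun y _ => by ring]
    rw [hc, gsum_single2 p q 1 1 _]; ring
  simp only [inner]
  rw [hc, gsum_single2 p q 1 1 (fun x => β x p + β x q)]; ring


private lemma csum_single2 {M : ℕ} (j k : Fin M) (hjk : j ≠ k) (a b : ℂ) (t : Fin M → ℂ) :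
    ∑ x, ((Pi.single j a + Pi.single k b : Fin M → ℂ)) x * t x = a * t j + b * t k := by
  simp [Pi.single_apply, add_mul, ite_mul, Finset.sum_add_distrib, Finset.sum_ite_eq']

private lemma quad_eval {M : ℕ} (A : Matrix (Fin M) (Fin M) ℂ) (j k : Fin M) (hjk : j ≠ k)
    (a b : ℂ) :
    (∑ x, ∑ y, star (((Pi.single j a + Pi.single k b : Fin M → ℂ)) x) * A x y
        * (((Pi.single j a + Pi.single k b : Fin M → ℂ)) y))
      = star a * A j j * a + star a * A j k * b + star b * A k j * a
        + star b * A k k * b := by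
  set h : Fin M → ℂ := (Pi.single j a + Pi.single k b : Fin M → ℂ) with hh
  have hstar : ∀ x, star (h x) = ((Pi.single j (star a) + Pi.single k (star b) : Fin M → ℂ)) x := by
    intro x; simp only [hh, Pi.add_apply, star_add, Pi.single_apply]
    split_ifs <;> simp
  have inner : ∀ x, ∑ y, star (h x) * A x y * h y
      = star (h x) * (a * A x j + b * A x k) := by
    intro x
    rw [show (∑ y, star (h x) * A x y * h y) = star (h x) * ∑ y, h y * A x y by
      rw [Finset.mul_sum]; exact Finset.sum_congr rfl fun y _ => by ring]
    rw [csum_single2 j k hjk a b (fun y => A x y)]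
  simp only [inner]
  rw [show (∑ x, star (h x) * (a * A x j + b * A x k))
      = ∑ x, ((Pi.single j (star a) + Pi.single k (star b) : Fin M → ℂ)) x
          * (a * A x j + b * A x k) from
    Finset.sum_congr rfl fun x _ => by rw [hstar]]
  rw [csum_single2 j k hjk (star a) (star b) (fun x => a * A x j + b * A x k)]
  ring

private lemma quad_eval1 {M : ℕ} (A : Matrix (Fin M) (Fin M) ℂ) (j : Fin M) (a : ℂ) :
    (∑ x, ∑ y, star ((Pi.single j a : Fin M → ℂ) x) * A x y * ((Pi.single j a : Fin M → ℂ) y))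
      = star a * A j j * a := by
  have inner : ∀ x, ∑ y, star ((Pi.single j a : Fin M → ℂ) x) * A x y * ((Pi.single j a : Fin M → ℂ) y)
      = star ((Pi.single j a : Fin M → ℂ) x) * A x j * a := by
    intro x
    simp [Pi.single_apply, mul_ite, Finset.sum_ite_eq']
  simp only [inner]
  simp [Pi.single_apply, apply_ite, ite_mul, Finset.sum_ite_eq']

private lemma herm_zero {M : ℕ} (A : Matrix (Fin M) (Fin M) ℂ) (hA : Aᴴ = A)
    (h0 : ∀ h : Fin M → ℂ, (∑ x, ∑ y, star (h x) * A x y * h y).re = 0) :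
    A = 0 := by
  have diag : ∀ j, A j j = 0 := by
    intro j
    have h1 := h0 (Pi.single j 1)
    rw [quad_eval1 A j 1] at h1
    simp at h1
    have h2 : (starRingEnd ℂ) (A j j) = A j j := by
      have := congrFun (congrFun hA j) j
      simpa [Matrix.conjTranspose_apply] using this
    have him : (A j j).im = 0 := by
      have := congrArg Complex.im h2
      simp [Complex.conj_im] at this
      linarith
    exact Complex.ext h1 him
  ext j k
  by_cases hjk : j = k
  · subst hjk; simpa using diag j
  · have hkj : A k j = (starRingEnd ℂ) (A j k) := by
      have := congrFun (congrFun hA k) j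
      simpa [Matrix.conjTranspose_apply] using this.symm
    have h1 := h0 (Pi.single j 1 + Pi.single k 1)
    have h2 := h0 (Pi.single j 1 + Pi.single k Complex.I)
    rw [quad_eval A j k hjk 1 1] at h1
    rw [quad_eval A j k hjk 1 Complex.I] at h2
    simp [diag, hkj, Complex.add_re, Complex.mul_re, Complex.conj_re,
      Complex.conj_im, Complex.I_re, Complex.I_im] at h1 h2
    have : A j k = 0 := by
      apply Complex.ext <;> simp <;> linarith
    simpa using this

end StbcAux

/-- A linear STBC `X c = ∑ l, c l • C l` is Γ-group decodable
(for every received matrix `Y` and channel `H`, the ML metric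
`‖Y − X c * H‖_F² = tr((Y − X c * H)ᴴ (Y − X c * H))` decouples into a constant plus
Γ submetrics, each depending only on the symbols of one group) iff
`(C p)ᴴ * C q + (C q)ᴴ * C p = 0` whenever `p` and `q` are in different groups. -/
theorem stbc_group_decodable_iff
    (T M L Γ : ℕ) (C : Fin L → Matrix (Fin T) (Fin M) ℂ)
    (g : Fin L → Fin Γ) :
    (∀ (N : ℕ) (Y : Matrix (Fin T) (Fin N) ℂ) (H : Matrix (Fin M) (Fin N) ℂ),
      ∃ (κ : ℝ) (f : Fin Γ → (Fin L → ℝ) → ℝ),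
        (∀ i (c c' : Fin L → ℝ), (∀ l, g l = i → c l = c' l) → f i c = f i c') ∧
        (∀ c : Fin L → ℝ,
          (Matrix.trace ((Y - (∑ l, c l • C l) * H)ᴴ * (Y - (∑ l, c l • C l) * H))).re
            = κ + ∑ i, f i c))
    ↔ (∀ p q, g p ≠ g q → (C p)ᴴ * C q + (C q)ᴴ * C p = 0) := by
  constructor
  · -- decodability implies the dispersion-matrix condition
    intro hdec p q hpq
    set A : Matrix (Fin M) (Fin M) ℂ := (C p)ᴴ * C q + (C q)ᴴ * C p with hAdef
    have hAH : Aᴴ = A := by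
      rw [hAdef]
      simp [Matrix.conjTranspose_add, Matrix.conjTranspose_mul]
      exact add_comm _ _
    refine herm_zero A hAH ?_
    intro h
    set H : Matrix (Fin M) (Fin 1) ℂ := Matrix.of (fun j _ => h j) with hHdef
    obtain ⟨κ, f, hf, hm⟩ := hdec 1 0 H
    set D : Fin L → Matrix (Fin T) (Fin 1) ℂ := fun l => C l * H with hD
    set β : Fin L → Fin L → ℝ := fun p' q' => (Matrix.trace ((D p')ᴴ * D q')).re with hβ
    have hX : ∀ c : Fin L → ℝ, (∑ l, c l • C l) * H = ∑ l, c l • D l := by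
      intro c; rw [Matrix.sum_mul]
      exact Finset.sum_congr rfl fun l _ => Matrix.smul_mul _ _ _
    have hm' : ∀ c : Fin L → ℝ, (∑ x, ∑ y, c x * c y * β x y) = κ + ∑ i, f i c := by
      intro c
      have hmc := hm c
      rw [hX c, stbc_expand 0 D c] at hmc
      simpa [hβ] using hmc
    have e0 := hm' 0
    simp only [Pi.zero_apply, zero_mul, Finset.sum_const_zero] at e0
    have ep := hm' (Pi.single p 1)
    rw [rquad_eval1 β p] at ep
    have eq' := hm' (Pi.single q 1)
    rw [rquad_eval1 β q] at eq'
    have epq := hm' (Pi.single p 1 + Pi.single q 1)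
    rw [rquad_eval2 β p q] at epq
    have hcancel : ∀ i, f i (Pi.single p 1 + Pi.single q 1) + f i 0
        = f i (Pi.single p 1) + f i (Pi.single q 1) := by
      intro i
      by_cases hi : i = g p
      · have h1 : f i (Pi.single p 1 + Pi.single q 1) = f i (Pi.single p 1) := by
          apply hf; intro l hl
          have hlq : l ≠ q := by rintro rfl; exact hpq ((hl.trans hi).symm)
          simp [Pi.single_eq_of_ne hlq]
        have h2 : f i (Pi.single q 1) = f i 0 := by
          apply hf; intro l hl
          have hlq : l ≠ q := by rintro rfl; exact hpq ((hl.trans hi).symm)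
          simp [Pi.single_eq_of_ne hlq]
        linarith
      · have h1 : f i (Pi.single p 1 + Pi.single q 1) = f i (Pi.single q 1) := by
          apply hf; intro l hl
          have hlp : l ≠ p := by rintro rfl; exact hi hl.symm
          simp [Pi.single_eq_of_ne hlp]
        have h2 : f i (Pi.single p 1) = f i 0 := by
          apply hf; intro l hl
          have hlp : l ≠ p := by rintro rfl; exact hi hl.symm
          simp [Pi.single_eq_of_ne hlp]
        linarith
    have hsum : (∑ i, f i (Pi.single p 1 + Pi.single q 1)) + ∑ i, f i 0
        = (∑ i, f i (Pi.single p 1)) + ∑ i, f i (Pi.single q 1) := by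
      rw [← Finset.sum_add_distrib, ← Finset.sum_add_distrib]
      exact Finset.sum_congr rfl fun i _ => hcancel i
    have hβpq : β p q + β q p = 0 := by linarith
    have key : (D p)ᴴ * D q + (D q)ᴴ * D p = Hᴴ * A * H := by
      rw [hAdef]
      simp [hD, Matrix.conjTranspose_mul, Matrix.mul_add, Matrix.add_mul, Matrix.mul_assoc]
    have htr : Matrix.trace (Hᴴ * A * H) = ∑ x, ∑ y, star (h x) * A x y * h y := by
      rw [Matrix.trace_fin_one]
      simp only [Matrix.mul_apply, Matrix.conjTranspose_apply, hHdef, Matrix.of_apply,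
        Finset.sum_mul]
      rw [Finset.sum_comm]
    have hfin : β p q + β q p = (∑ x, ∑ y, star (h x) * A x y * h y).re := by
      have : β p q + β q p = (Matrix.trace ((D p)ᴴ * D q + (D q)ᴴ * D p)).re := by
        simp [hβ, Matrix.trace_add]
      rw [this, key, htr]
    rw [← hfin]; exact hβpq
  · -- the dispersion-matrix condition implies decodability
    intro hC N Y H
    set D : Fin L → Matrix (Fin T) (Fin N) ℂ := fun l => C l * H with hD
    set α : Fin L → ℝ := fun l => (Matrix.trace (Yᴴ * D l)).re with hα
    set β : Fin L → Fin L → ℝ := fun p q => (Matrix.trace ((D p)ᴴ * D q)).re with hβ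
    have hβ0 : ∀ p q, g p ≠ g q → β p q = 0 := by
      intro p q hpq
      have hz : (D p)ᴴ * D q + (D q)ᴴ * D p = 0 := by
        have key : (D p)ᴴ * D q + (D q)ᴴ * D p
            = Hᴴ * ((C p)ᴴ * C q + (C q)ᴴ * C p) * H := by
          simp [hD, Matrix.conjTranspose_mul, Matrix.mul_add, Matrix.add_mul, Matrix.mul_assoc]
        rw [key, hC p q hpq]; simp
      have hsym : β q p = β p q := re_trace_conj (D p) (D q)
      have hz2 : β p q + β q p = 0 := by
        have := congrArg (fun X => (Matrix.trace X).re) hz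
        simpa [hβ, Matrix.trace_add] using this
      linarith
    refine ⟨(Matrix.trace (Yᴴ * Y)).re,
      fun i c => (∑ l ∈ Finset.univ.filter (fun l => g l = i), (-2) * (c l * α l))
        + ∑ p ∈ Finset.univ.filter (fun l => g l = i),
            ∑ q ∈ Finset.univ.filter (fun l => g l = i), c p * c q * β p q, ?_, ?_⟩
    · intro i c c' hcc
      have h1 : ∀ l ∈ Finset.univ.filter (fun l => g l = i), c l = c' l :=
        fun l hl => hcc l (Finset.mem_filter.mp hl).2
      have e1 : (∑ l ∈ Finset.univ.filter (fun l => g l = i), (-2) * (c l * α l))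
          = ∑ l ∈ Finset.univ.filter (fun l => g l = i), (-2) * (c' l * α l) :=
        Finset.sum_congr rfl fun l hl => by rw [h1 l hl]
      have e2 : (∑ p ∈ Finset.univ.filter (fun l => g l = i),
            ∑ q ∈ Finset.univ.filter (fun l => g l = i), c p * c q * β p q)
          = ∑ p ∈ Finset.univ.filter (fun l => g l = i),
            ∑ q ∈ Finset.univ.filter (fun l => g l = i), c' p * c' q * β p q :=
        Finset.sum_congr rfl fun p hp => Finset.sum_congr rfl fun q hq => by
          rw [h1 p hp, h1 q hq]
      dsimp only
      rw [e1, e2]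
    · intro c
      have hX : (∑ l, c l • C l) * H = ∑ l, c l • D l := by
        rw [Matrix.sum_mul]
        exact Finset.sum_congr rfl fun l _ => Matrix.smul_mul _ _ _
      rw [hX, stbc_expand Y D c]
      have lin : (∑ i, ∑ l ∈ Finset.univ.filter (fun l => g l = i), (-2) * (c l * α l))
          = -2 * ∑ l, c l * α l :=
        calc (∑ i, ∑ l ∈ Finset.univ.filter (fun l => g l = i), (-2) * (c l * α l))
            = ∑ l, (-2) * (c l * α l) := Finset.sum_fiberwise _ _ _
          _ = -2 * ∑ l, c l * α l := (Finset.mul_sum _ _ _).symm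
      have quad : (∑ i, ∑ p ∈ Finset.univ.filter (fun l => g l = i),
            ∑ q ∈ Finset.univ.filter (fun l => g l = i), c p * c q * β p q)
          = ∑ p, ∑ q, c p * c q * β p q := by
        have step : ∀ i, ∀ p ∈ Finset.univ.filter (fun l => g l = i),
            (∑ q ∈ Finset.univ.filter (fun l => g l = i), c p * c q * β p q)
              = ∑ q, c p * c q * β p q := by
          intro i p hp
          apply Finset.sum_filter_of_ne
          intro q _ hne
          by_contra hq
          apply hne
          have hgg : g p ≠ g q := by
            rw [(Finset.mem_filter.mp hp).2]; exact fun hqe => hq hqe.symm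
          rw [hβ0 p q hgg, mul_zero]
        calc (∑ i, ∑ p ∈ Finset.univ.filter (fun l => g l = i),
              ∑ q ∈ Finset.univ.filter (fun l => g l = i), c p * c q * β p q)
            = ∑ i, ∑ p ∈ Finset.univ.filter (fun l => g l = i),
              ∑ q, c p * c q * β p q :=
              Finset.sum_congr rfl fun i _ => Finset.sum_congr rfl fun p hp => step i p hp
          _ = ∑ p, ∑ q, c p * c q * β p q := Finset.sum_fiberwise _ _ _
      rw [Finset.sum_add_distrib, lin, quad]
      simp only [hα, hβ]
      ring
end

section
/- Suppose the dispersion matrix pairs (A_k, B_k), 1 ≤ k ≤ K, of a T×M linear STBC satisfy the Γ-group decodability conditions A_p†A_q + A_q†A_p = 0, B_p†B_q + B_q†B_p = 0, and A_p†B_q + B_q†A_p = 0 for all p, q in different groups. Define 2T×2M matrices Ā_{2k-1} = diag(A_k, A_k), Ā_{2k} = diag(B_k, B_k), B̄_{2k-1} = antidiag(A_k, A_k), B̄_{2k} = antidiag(B_k, B_k) (block diagonal and block anti-diagonal 2×2 block matrices). Then the pairs (Ā_i, B̄_i), 1 ≤ i ≤ 2K, satisfy the same three anti-commutation conditions whenever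 2p−1, 2p and 2q−1, 2q are assigned to different groups inherited from p and q. -/
open Matrix

/-- If the dispersion pairs `(A k, B k)` satisfy the Γ-group decodability
anti-commutation conditions for indices in different groups, then the doubled-size
dispersion pairs `(Ā, B̄)` built by the block-diagonal / block-anti-diagonal mapping
(index `(k, false) ↔ 2k−1`, `(k, true) ↔ 2k`, inheriting the group of `k`)
satisfy the same three conditions. -/
theorem fourGp_recursive_construction
    (T M K Γ : ℕ) (A B : Fin K → Matrix (Fin T) (Fin M) ℂ) (g : Fin K → Fin Γ)
    (hA : ∀ p q, g p ≠ g q → (A p)ᴴ * A q + (A q)ᴴ * A p = 0)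
    (hB : ∀ p q, g p ≠ g q → (B p)ᴴ * B q + (B q)ᴴ * B p = 0)
    (hAB : ∀ p q, g p ≠ g q → (A p)ᴴ * B q + (B q)ᴴ * A p = 0)
    (Abar Bbar : Fin K × Bool → Matrix (Fin T ⊕ Fin T) (Fin M ⊕ Fin M) ℂ)
    (hAbar : ∀ k, Abar (k, false) = Matrix.fromBlocks (A k) 0 0 (A k) ∧
                  Abar (k, true)  = Matrix.fromBlocks (B k) 0 0 (B k))
    (hBbar : ∀ k, Bbar (k, false) = Matrix.fromBlocks 0 (A k) (A k) 0 ∧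
                  Bbar (k, true)  = Matrix.fromBlocks 0 (B k) (B k) 0) :
    ∀ p q : Fin K × Bool, g p.1 ≠ g q.1 →
      (Abar p)ᴴ * Abar q + (Abar q)ᴴ * Abar p = 0 ∧
      (Bbar p)ᴴ * Bbar q + (Bbar q)ᴴ * Bbar p = 0 ∧
      (Abar p)ᴴ * Bbar q + (Bbar q)ᴴ * Abar p = 0 := by
  rintro ⟨p, bp⟩ ⟨q, bq⟩ h
  have h1 := hA p q h
  have h2 := hB p q h
  have h3 := hAB p q h
  have h4 := hAB q p h.symm
  cases bp <;> cases bq <;>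
    refine ⟨?_, ?_, ?_⟩ <;>
    simp only [(hAbar p).1, (hAbar p).2, (hAbar q).1, (hAbar q).2,
      (hBbar p).1, (hBbar p).2, (hBbar q).1, (hBbar q).2,
      fromBlocks_conjTranspose, fromBlocks_multiply, fromBlocks_add,
      conjTranspose_zero, Matrix.mul_zero, Matrix.zero_mul,
      add_zero, zero_add, h1, h2, h3, h4,
      add_comm ((B p)ᴴ * A q) ((A q)ᴴ * B p), fromBlocks_zero]
end

section
/- (Craig's formula) For x > 0, Q(x) = (1/π) ∫₀^{π/2} exp(−x²/(2 sin² α)) dα, where Q is the Gaussian tail function Q(x) = (1/√(2π)) ∫_x^∞ e^{−t²/2} dt. -/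
open Real MeasureTheory intervalIntegral

open Set in
lemma rayleigh_tail (c : ℝ) :
    ∫ r in Set.Ioi c, r * Real.exp (-r ^ 2 / 2) = Real.exp (-c ^ 2 / 2) := by
  have hderiv : ∀ r ∈ Set.Ici c, HasDerivAt (fun r : ℝ => -Real.exp (-r ^ 2 / 2))
      (r * Real.exp (-r ^ 2 / 2)) r := by
    intro r _
    have h : HasDerivAt (fun r : ℝ => -r ^ 2 / 2) (-r) r := by
      have := ((hasDerivAt_pow 2 r).neg).div_const 2
      simpa using this.congr_deriv (by ring)
    have := (h.exp).neg
    exact this.congr_deriv (by ring)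
  have hint : IntegrableOn (fun r : ℝ => r * Real.exp (-r ^ 2 / 2)) (Set.Ioi c) := by
    have := (integrable_mul_exp_neg_mul_sq (b := 1/2) (by norm_num)).integrableOn (s := Set.Ioi c)
    refine this.congr_fun (fun r _ => by ring_nf) measurableSet_Ioi
  have htend : Filter.Tendsto (fun r : ℝ => -Real.exp (-r ^ 2 / 2)) Filter.atTop (nhds 0) := by
    rw [← neg_zero]
    refine Filter.Tendsto.neg ?_
    have : Filter.Tendsto (fun r : ℝ => -r ^ 2 / 2) Filter.atTop Filter.atBot := by
      apply Filter.Tendsto.atBot_div_const (by norm_num)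
      exact Filter.tendsto_neg_atTop_atBot.comp (Filter.tendsto_pow_atTop two_ne_zero)
    exact Real.tendsto_exp_atBot.comp this
  have := MeasureTheory.integral_Ioi_of_hasDerivAt_of_tendsto' hderiv hint htend
  rw [this]; ring

lemma h_meas (x : ℝ) : Measurable (fun θ : ℝ => Real.exp (-x ^ 2 / (2 * Real.cos θ ^ 2))) := by
  exact Real.measurable_exp.comp
    (measurable_const.div ((measurable_const.mul ((Real.continuous_cos.measurable).pow_const 2))))

lemma h_le_one (x θ : ℝ) : Real.exp (-x ^ 2 / (2 * Real.cos θ ^ 2)) ≤ 1 := by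
  rw [Real.exp_le_one_iff]
  apply div_nonpos_of_nonpos_of_nonneg
  · simp [sq_nonneg]
  · positivity

lemma h_intervalIntegrable (x a b : ℝ) :
    IntervalIntegrable (fun θ : ℝ => Real.exp (-x ^ 2 / (2 * Real.cos θ ^ 2))) volume a b := by
  rw [intervalIntegrable_iff]
  refine Integrable.mono' (g := fun _ => (1:ℝ))
    (integrableOn_const measure_Ioc_lt_top.ne) ((h_meas x).aestronglyMeasurable.restrict) ?_
  filter_upwards with θ
  rw [Real.norm_eq_abs, abs_of_pos (Real.exp_pos _)]
  exact h_le_one x θ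

lemma stepD (x : ℝ) :
    ∫ θ in Set.Ioo (-(π/2)) (π/2), Real.exp (-x ^ 2 / (2 * Real.cos θ ^ 2))
      = 2 * ∫ α in (0:ℝ)..(π/2), Real.exp (-x ^ 2 / (2 * Real.sin α ^ 2)) := by
  have hpi : (0:ℝ) < π / 2 := by positivity
  have h1 : ∫ θ in Set.Ioo (-(π/2)) (π/2), Real.exp (-x ^ 2 / (2 * Real.cos θ ^ 2))
      = ∫ θ in (-(π/2))..(π/2), Real.exp (-x ^ 2 / (2 * Real.cos θ ^ 2)) := by
    rw [intervalIntegral.integral_of_le (by linarith), MeasureTheory.integral_Ioc_eq_integral_Ioo]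
  have h2 : ∫ θ in (-(π/2))..(0:ℝ), Real.exp (-x ^ 2 / (2 * Real.cos θ ^ 2))
      = ∫ θ in (0:ℝ)..(π/2), Real.exp (-x ^ 2 / (2 * Real.cos θ ^ 2)) := by
    have := intervalIntegral.integral_comp_neg (a := 0) (b := π/2)
      (fun θ : ℝ => Real.exp (-x ^ 2 / (2 * Real.cos θ ^ 2)))
    simp only [Real.cos_neg, neg_zero] at this
    rw [← this]
  have h3 : ∫ θ in (0:ℝ)..(π/2), Real.exp (-x ^ 2 / (2 * Real.cos θ ^ 2))
      = ∫ α in (0:ℝ)..(π/2), Real.exp (-x ^ 2 / (2 * Real.sin α ^ 2)) := by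
    have := intervalIntegral.integral_comp_sub_left (a := 0) (b := π/2)
      (fun α : ℝ => Real.exp (-x ^ 2 / (2 * Real.sin α ^ 2))) (π/2)
    simp only [Real.sin_pi_div_two_sub, sub_zero, sub_self] at this
    rw [← this]
  rw [h1, ← intervalIntegral.integral_add_adjacent_intervals
    (h_intervalIntegrable x (-(π/2)) 0) (h_intervalIntegrable x 0 (π/2)), h2, h3]
  ring

lemma inner_r (x θ : ℝ) (hx : 0 < x) (hθ : θ ∈ Set.Ioo (-π) π) :
    (∫ r in Set.Ioi (0:ℝ), r * ({p : ℝ × ℝ | x < p.1}).indicator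
        (fun p => Real.exp (-(p.1 ^ 2 + p.2 ^ 2) / 2)) (r * Real.cos θ, r * Real.sin θ))
      = (Set.Ioo (-(π/2)) (π/2)).indicator (fun θ => Real.exp (-x ^ 2 / (2 * Real.cos θ ^ 2))) θ := by
  have hsq : ∀ r : ℝ, (r * Real.cos θ) ^ 2 + (r * Real.sin θ) ^ 2 = r ^ 2 := by
    intro r
    have := Real.sin_sq_add_cos_sq θ
    nlinarith [this]
  by_cases hcos : 0 < Real.cos θ
  · have hmem : θ ∈ Set.Ioo (-(π/2)) (π/2) := by
      constructor
      · by_contra h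
        push_neg at h
        have : Real.cos (-θ) ≤ 0 :=
          Real.cos_nonpos_of_pi_div_two_le_of_le (by linarith) (by linarith [hθ.1, Real.pi_pos])
        rw [Real.cos_neg] at this; linarith
      · by_contra h
        push_neg at h
        have : Real.cos θ ≤ 0 :=
          Real.cos_nonpos_of_pi_div_two_le_of_le h (by linarith [hθ.2, Real.pi_pos])
        linarith
    rw [Set.indicator_of_mem hmem]
    have hxc : 0 < x / Real.cos θ := div_pos hx hcos
    have hcongr : ∀ r ∈ Set.Ioi (0:ℝ),
        r * ({p : ℝ × ℝ | x < p.1}).indicator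
          (fun p => Real.exp (-(p.1 ^ 2 + p.2 ^ 2) / 2)) (r * Real.cos θ, r * Real.sin θ)
        = (Set.Ioi (x / Real.cos θ)).indicator (fun r => r * Real.exp (-r ^ 2 / 2)) r := by
      intro r hr
      by_cases h : x / Real.cos θ < r
      · rw [Set.indicator_of_mem (show r ∈ Set.Ioi _ from h),
          Set.indicator_of_mem (show ((r * Real.cos θ, r * Real.sin θ) : ℝ × ℝ) ∈ {p : ℝ × ℝ | x < p.1} from
            by simpa [Set.mem_setOf_eq] using (div_lt_iff₀ hcos).mp h)]
        rw [hsq r]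
      · rw [Set.indicator_of_notMem (show r ∉ Set.Ioi _ from h),
          Set.indicator_of_notMem (show ((r * Real.cos θ, r * Real.sin θ) : ℝ × ℝ) ∉ {p : ℝ × ℝ | x < p.1} from
            by simpa [Set.mem_setOf_eq] using fun hc => h ((div_lt_iff₀ hcos).mpr hc)), mul_zero]
    rw [MeasureTheory.setIntegral_congr_fun measurableSet_Ioi hcongr,
      MeasureTheory.setIntegral_indicator measurableSet_Ioi,
      show Set.Ioi (0:ℝ) ∩ Set.Ioi (x / Real.cos θ) = Set.Ioi (x / Real.cos θ) by
        rw [Set.Ioi_inter_Ioi, max_eq_right hxc.le],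
      rayleigh_tail]
    congr 1
    field_simp
  · push_neg at hcos
    have hmem : θ ∉ Set.Ioo (-(π/2)) (π/2) := by
      intro h
      exact absurd (Real.cos_pos_of_mem_Ioo h) (not_lt.mpr hcos)
    rw [Set.indicator_of_notMem hmem]
    have hcongr : ∀ r ∈ Set.Ioi (0:ℝ),
        r * ({p : ℝ × ℝ | x < p.1}).indicator
          (fun p => Real.exp (-(p.1 ^ 2 + p.2 ^ 2) / 2)) (r * Real.cos θ, r * Real.sin θ)
        = 0 := by
      intro r hr
      rw [Set.indicator_of_notMem, mul_zero]
      intro hc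
      simp only [Set.mem_setOf_eq] at hc
      nlinarith [mul_nonpos_of_nonneg_of_nonpos (le_of_lt hr) hcos]
    rw [MeasureTheory.setIntegral_congr_fun measurableSet_Ioi hcongr]
    simp

lemma f_meas (x : ℝ) : Measurable (({p : ℝ × ℝ | x < p.1}).indicator
    (fun p : ℝ × ℝ => Real.exp (-(p.1 ^ 2 + p.2 ^ 2) / 2))) := by
  refine Measurable.indicator ?_ ?_
  · exact (Real.continuous_exp.comp (by continuity)).measurable
  · exact measurableSet_lt measurable_const measurable_fst

lemma G_int (x : ℝ) : Integrable
    ((Set.Ioi (0:ℝ) ×ˢ Set.Ioo (-π) π).indicator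
      (fun q : ℝ × ℝ => q.1 * ({p : ℝ × ℝ | x < p.1}).indicator
        (fun p : ℝ × ℝ => Real.exp (-(p.1 ^ 2 + p.2 ^ 2) / 2)) (q.1 * Real.cos q.2, q.1 * Real.sin q.2)))
    (volume.prod volume) := by
  have hmeas : Measurable (fun q : ℝ × ℝ => q.1 * ({p : ℝ × ℝ | x < p.1}).indicator
      (fun p : ℝ × ℝ => Real.exp (-(p.1 ^ 2 + p.2 ^ 2) / 2)) (q.1 * Real.cos q.2, q.1 * Real.sin q.2)) := by
    refine measurable_fst.mul ((f_meas x).comp ?_)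
    exact (measurable_fst.mul (Real.continuous_cos.measurable.comp measurable_snd)).prodMk
      (measurable_fst.mul (Real.continuous_sin.measurable.comp measurable_snd))
  have h1 : Integrable (fun r : ℝ => |r| * Real.exp (-r ^ 2 / 2)) := by
    have := (integrable_mul_exp_neg_mul_sq (b := 1/2) (by norm_num)).abs
    refine this.congr ?_
    filter_upwards with r
    rw [abs_mul, abs_of_pos (Real.exp_pos _)]
    ring_nf
  have h2 : Integrable ((Set.Ioo (-π) π).indicator (fun _ : ℝ => (1:ℝ))) := by
    rw [integrable_indicator_iff measurableSet_Ioo]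
    exact integrableOn_const measure_Ioo_lt_top.ne
  refine Integrable.mono' (h1.mul_prod h2)
    ((hmeas.indicator ((measurableSet_Ioi.prod measurableSet_Ioo))).aestronglyMeasurable) ?_
  filter_upwards with q
  rw [Real.norm_eq_abs]
  by_cases hq : q ∈ Set.Ioi (0:ℝ) ×ˢ Set.Ioo (-π) π
  · rw [Set.indicator_of_mem hq]
    have hsq : (q.1 * Real.cos q.2) ^ 2 + (q.1 * Real.sin q.2) ^ 2 = q.1 ^ 2 := by
      nlinarith [Real.sin_sq_add_cos_sq q.2]
    have hf_le : ({p : ℝ × ℝ | x < p.1}).indicator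
        (fun p : ℝ × ℝ => Real.exp (-(p.1 ^ 2 + p.2 ^ 2) / 2)) (q.1 * Real.cos q.2, q.1 * Real.sin q.2)
        ≤ Real.exp (-q.1 ^ 2 / 2) := by
      by_cases hm : ((q.1 * Real.cos q.2, q.1 * Real.sin q.2) : ℝ × ℝ) ∈ {p : ℝ × ℝ | x < p.1}
      · rw [Set.indicator_of_mem hm]
        simp only
        rw [hsq]
      · rw [Set.indicator_of_notMem hm]
        positivity
    have hf_nonneg : 0 ≤ ({p : ℝ × ℝ | x < p.1}).indicator
        (fun p : ℝ × ℝ => Real.exp (-(p.1 ^ 2 + p.2 ^ 2) / 2)) (q.1 * Real.cos q.2, q.1 * Real.sin q.2) :=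
      Set.indicator_nonneg (fun _ _ => (Real.exp_pos _).le) _
    rw [Set.indicator_of_mem hq.2, mul_one, abs_mul, abs_of_nonneg hf_nonneg]
    exact mul_le_mul_of_nonneg_left hf_le (abs_nonneg _)
  · rw [Set.indicator_of_notMem hq, abs_zero]
    exact mul_nonneg (by positivity) (Set.indicator_nonneg (fun _ _ => zero_le_one) _)

lemma polar_side (x : ℝ) (hx : 0 < x) :
    (∫ p in polarCoord.target, p.1 • ({p : ℝ × ℝ | x < p.1}).indicator
        (fun p : ℝ × ℝ => Real.exp (-(p.1 ^ 2 + p.2 ^ 2) / 2)) (polarCoord.symm p))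
      = 2 * ∫ α in (0:ℝ)..(π/2), Real.exp (-x ^ 2 / (2 * Real.sin α ^ 2)) := by
  have hsymm : ∀ p : ℝ × ℝ, polarCoord.symm p = (p.1 * Real.cos p.2, p.1 * Real.sin p.2) :=
    fun _ => rfl
  have htarget : polarCoord.target = Set.Ioi (0:ℝ) ×ˢ Set.Ioo (-π) π := rfl
  simp_rw [smul_eq_mul, hsymm, htarget]
  rw [← MeasureTheory.integral_indicator (measurableSet_Ioi.prod measurableSet_Ioo)]
  rw [MeasureTheory.Measure.volume_eq_prod]
  rw [MeasureTheory.integral_prod_symm _ (G_int x)]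
  have hinner : ∀ θ : ℝ,
      (∫ r : ℝ, (Set.Ioi (0:ℝ) ×ˢ Set.Ioo (-π) π).indicator
        (fun q : ℝ × ℝ => q.1 * ({p : ℝ × ℝ | x < p.1}).indicator
          (fun p : ℝ × ℝ => Real.exp (-(p.1 ^ 2 + p.2 ^ 2) / 2))
          (q.1 * Real.cos q.2, q.1 * Real.sin q.2)) (r, θ))
      = (Set.Ioo (-(π/2)) (π/2)).indicator
          (fun θ => Real.exp (-x ^ 2 / (2 * Real.cos θ ^ 2))) θ := by
    intro θ
    by_cases hθ : θ ∈ Set.Ioo (-π) π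
    · have hpt : ∀ r : ℝ, (Set.Ioi (0:ℝ) ×ˢ Set.Ioo (-π) π).indicator
          (fun q : ℝ × ℝ => q.1 * ({p : ℝ × ℝ | x < p.1}).indicator
            (fun p : ℝ × ℝ => Real.exp (-(p.1 ^ 2 + p.2 ^ 2) / 2))
            (q.1 * Real.cos q.2, q.1 * Real.sin q.2)) (r, θ)
          = (Set.Ioi (0:ℝ)).indicator
            (fun r => r * ({p : ℝ × ℝ | x < p.1}).indicator
              (fun p : ℝ × ℝ => Real.exp (-(p.1 ^ 2 + p.2 ^ 2) / 2))
              (r * Real.cos θ, r * Real.sin θ)) r := by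
        intro r
        by_cases hr : r ∈ Set.Ioi (0:ℝ)
        · rw [Set.indicator_of_mem (Set.mk_mem_prod hr hθ), Set.indicator_of_mem hr]
        · rw [Set.indicator_of_notMem (fun hc => hr hc.1), Set.indicator_of_notMem hr]
      simp_rw [hpt]
      rw [MeasureTheory.integral_indicator measurableSet_Ioi]
      exact inner_r x θ hx hθ
    · have hpt : ∀ r : ℝ, (Set.Ioi (0:ℝ) ×ˢ Set.Ioo (-π) π).indicator
          (fun q : ℝ × ℝ => q.1 * ({p : ℝ × ℝ | x < p.1}).indicator
            (fun p : ℝ × ℝ => Real.exp (-(p.1 ^ 2 + p.2 ^ 2) / 2))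
            (q.1 * Real.cos q.2, q.1 * Real.sin q.2)) (r, θ) = 0 := by
        intro r
        exact Set.indicator_of_notMem (fun hc => hθ hc.2) _
      simp_rw [hpt]
      rw [MeasureTheory.integral_zero]
      have hθ' : θ ∉ Set.Ioo (-(π/2)) (π/2) := by
        intro hc
        exact hθ ⟨by linarith [hc.1, Real.pi_pos, Real.pi_gt_three],
          by linarith [hc.2, Real.pi_pos]⟩
      rw [Set.indicator_of_notMem hθ']
  simp_rw [hinner]
  rw [MeasureTheory.integral_indicator measurableSet_Ioo]
  exact stepD x

lemma step1 (x : ℝ) :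
    ∫ p : ℝ × ℝ, ({p : ℝ × ℝ | x < p.1}).indicator
        (fun p => Real.exp (-(p.1 ^ 2 + p.2 ^ 2) / 2)) p
      = (∫ t in Set.Ioi x, Real.exp (-t ^ 2 / 2)) * Real.sqrt (2 * π) := by
  have hpt : ∀ p : ℝ × ℝ, ({p : ℝ × ℝ | x < p.1}).indicator
        (fun p => Real.exp (-(p.1 ^ 2 + p.2 ^ 2) / 2)) p
      = (Set.Ioi x).indicator (fun u => Real.exp (-u ^ 2 / 2)) p.1
          * Real.exp (-p.2 ^ 2 / 2) := by
    intro p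
    by_cases h : x < p.1
    · rw [Set.indicator_of_mem (show p ∈ {p : ℝ × ℝ | x < p.1} from h),
        Set.indicator_of_mem (show p.1 ∈ Set.Ioi x from h)]
      rw [← Real.exp_add]; ring_nf
    · rw [Set.indicator_of_notMem (show p ∉ {p : ℝ × ℝ | x < p.1} from h),
        Set.indicator_of_notMem (show p.1 ∉ Set.Ioi x from h), zero_mul]
  simp_rw [hpt]
  rw [MeasureTheory.Measure.volume_eq_prod,
    MeasureTheory.integral_prod_mul (f := fun u => (Set.Ioi x).indicator (fun u => Real.exp (-u ^ 2 / 2)) u)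
      (g := fun v => Real.exp (-v ^ 2 / 2))]
  congr 1
  · rw [MeasureTheory.integral_indicator measurableSet_Ioi]
  · have := integral_gaussian (1/2)
    simp_rw [show ∀ v : ℝ, -v ^ 2 / 2 = -(1/2) * v ^ 2 by intro v; ring] at *
    rw [this]
    congr 1
    ring

/-- Craig's formula: for `x > 0`, the Gaussian tail function
`Q(x) = (1/√(2π)) ∫_x^∞ e^{−t²/2} dt` equals
`(1/π) ∫₀^{π/2} exp(−x²/(2 sin² α)) dα`. -/
theorem craig_formula (x : ℝ) (hx : 0 < x) :
    (1 / Real.sqrt (2 * π)) * ∫ t in Set.Ioi x, Real.exp (-t ^ 2 / 2) =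
      (1 / π) * ∫ α in (0 : ℝ)..(π / 2), Real.exp (-x ^ 2 / (2 * Real.sin α ^ 2)) := by
  have key : (∫ t in Set.Ioi x, Real.exp (-t ^ 2 / 2)) * Real.sqrt (2 * π)
      = 2 * ∫ α in (0 : ℝ)..(π / 2), Real.exp (-x ^ 2 / (2 * Real.sin α ^ 2)) := by
    rw [← step1 x, ← integral_comp_polarCoord_symm, polar_side x hx]
  have h2π : Real.sqrt (2*π) * Real.sqrt (2*π) = 2*π :=
    Real.mul_self_sqrt (by positivity)
  have hs : (0:ℝ) < Real.sqrt (2*π) := Real.sqrt_pos.mpr (by positivity)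
  have hπ : (0:ℝ) < π := Real.pi_pos
  rw [one_div, one_div, inv_mul_eq_div, inv_mul_eq_div, div_eq_div_iff hs.ne' hπ.ne']
  linear_combination (Real.sqrt (2*π)/2) * key
    - ((∫ t in Set.Ioi x, Real.exp (-t ^ 2 / 2))/2) * h2π
end

section
/- Fix nonzero reals β₁,…,β₄. As ρ → ∞, the exact PEP P(ρ) = (1/π)∫₀^{π/2} Π_{i=1}^4 (1 + ρβ_i²/(8 sin²α))^{−2} dα satisfies P(ρ) · ρ^8 → (2^{24}/π) (∫₀^{π/2} sin^{16}α dα) Π_{i=1}^4 β_i^{−4}; in particular P(ρ) decays like ρ^{−8} (diversity order 8). -/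
open Real Filter MeasureTheory

/-- for nonzero reals `β₁,…,β₄`, the exact PEP
`P(ρ) = (1/π)∫₀^{π/2} Π_{i=1}^4 (1 + ρβ_i²/(8 sin²α))^{−2} dα` satisfies
`ρ⁸ P(ρ) → (2²⁴/π)(∫₀^{π/2} sin¹⁶α dα) Π_i β_i^{−4}` as `ρ → ∞`;
in particular `P(ρ)` decays like `ρ^{−8}` (diversity order 8). -/
theorem pep_high_snr_asymptotics (β : Fin 4 → ℝ) (hβ : ∀ i, β i ≠ 0) :
    Tendsto
      (fun ρ : ℝ => ρ ^ 8 * ((1 / π) * ∫ α in (0 : ℝ)..(π / 2),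
        ∏ i : Fin 4, ((1 + ρ * β i ^ 2 / (8 * Real.sin α ^ 2)) ^ 2)⁻¹))
      atTop
      (nhds ((2 ^ 24 / π) * (∫ α in (0 : ℝ)..(π / 2), Real.sin α ^ 16) *
        ∏ i : Fin 4, (β i ^ 4)⁻¹)) := by
  have hπ : (0:ℝ) < π := Real.pi_pos
  have hle : (0:ℝ) ≤ π/2 := by positivity
  have hβ2 : ∀ i, (0:ℝ) < β i ^ 2 := fun i => by have := hβ i; positivity
  have hβ4 : ∀ i, (0:ℝ) < (β i ^ 4)⁻¹ := fun i => by
    have := hβ i; positivity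
  set C : ℝ := 2 ^ 24 * ∏ i : Fin 4, (β i ^ 4)⁻¹ with hC
  set f : ℝ → ℝ := fun α => C * Real.sin α ^ 16 with hf
  have hsin : ∀ α ∈ Set.Ioc (0:ℝ) (π/2), 0 < Real.sin α := fun α hα =>
    Real.sin_pos_of_pos_of_lt_pi hα.1 (lt_of_le_of_lt hα.2 (by linarith))
  -- the product identity in the limit
  have prodid : ∀ α : ℝ, 0 < Real.sin α →
      (∏ i : Fin 4, ((β i ^ 2 / (8 * Real.sin α ^ 2)) ^ 2)⁻¹) = f α := by
    intro α hs
    have hs' : Real.sin α ≠ 0 := ne_of_gt hs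
    have h : ∀ i : Fin 4, ((β i ^ 2 / (8 * Real.sin α ^ 2)) ^ 2)⁻¹
        = (64 * Real.sin α ^ 4) * (β i ^ 4)⁻¹ := by
      intro i
      have hb := hβ i
      field_simp
      ring
    rw [Finset.prod_congr rfl fun i _ => h i, Finset.prod_mul_distrib,
      Finset.prod_const]
    simp only [hf, hC, Finset.card_univ, Fintype.card_fin]
    ring
  -- key algebraic identity
  have key : ∀ (ρ : ℝ), 0 < ρ → ∀ α ∈ Set.Ioc (0:ℝ) (π/2),
      ρ ^ 8 * ∏ i : Fin 4, ((1 + ρ * β i ^ 2 / (8 * Real.sin α ^ 2)) ^ 2)⁻¹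
        = ∏ i : Fin 4, ((ρ⁻¹ + β i ^ 2 / (8 * Real.sin α ^ 2)) ^ 2)⁻¹ := by
    intro ρ hρ α hα
    have hs := hsin α hα
    have hs' : Real.sin α ≠ 0 := ne_of_gt hs
    have hρ' : ρ ≠ 0 := ne_of_gt hρ
    have h8 : ρ ^ 8 = ∏ _i : Fin 4, ρ ^ 2 := by
      simp [Finset.prod_const]; ring
    rw [h8, ← Finset.prod_mul_distrib]
    refine Finset.prod_congr rfl fun i _ => ?_
    have hc : 0 < β i ^ 2 / (8 * Real.sin α ^ 2) := by
      have := hβ2 i; positivity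
    have hd : 0 < ρ * β i ^ 2 / (8 * Real.sin α ^ 2) := by
      have := hβ2 i; positivity
    have h1 : (1 + ρ * β i ^ 2 / (8 * Real.sin α ^ 2)) ≠ 0 := by nlinarith
    have h2 : (ρ⁻¹ + β i ^ 2 / (8 * Real.sin α ^ 2)) ≠ 0 := by
      have : 0 < ρ⁻¹ := inv_pos.mpr hρ
      positivity
    field_simp
  -- pointwise limit
  have hlim : ∀ α ∈ Set.Ioc (0:ℝ) (π/2),
      Tendsto (fun ρ : ℝ =>
          ρ ^ 8 * ∏ i : Fin 4, ((1 + ρ * β i ^ 2 / (8 * Real.sin α ^ 2)) ^ 2)⁻¹)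
        atTop (nhds (f α)) := by
    intro α hα
    have hs := hsin α hα
    have hprod : Tendsto
        (fun ρ : ℝ => ∏ i : Fin 4, ((ρ⁻¹ + β i ^ 2 / (8 * Real.sin α ^ 2)) ^ 2)⁻¹)
        atTop
        (nhds (∏ i : Fin 4, (((0:ℝ) + β i ^ 2 / (8 * Real.sin α ^ 2)) ^ 2)⁻¹)) := by
      refine tendsto_finset_prod _ fun i _ => ?_
      have hc : 0 < β i ^ 2 / (8 * Real.sin α ^ 2) := by
        have := hβ2 i; positivity
      have h0 : (((0:ℝ) + β i ^ 2 / (8 * Real.sin α ^ 2)) ^ 2) ≠ 0 := by positivity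
      exact ((tendsto_inv_atTop_zero.add tendsto_const_nhds).pow 2).inv₀ h0
    have heq : (∏ i : Fin 4, (((0:ℝ) + β i ^ 2 / (8 * Real.sin α ^ 2)) ^ 2)⁻¹) = f α := by
      simp only [zero_add]
      exact prodid α hs
    rw [heq] at hprod
    refine hprod.congr' ?_
    filter_upwards [eventually_gt_atTop (0:ℝ)] with ρ hρ
    exact (key ρ hρ α hα).symm
  -- measurability
  have hmeas : ∀ ρ : ℝ, AEStronglyMeasurable
      (fun α => ρ ^ 8 * ∏ i : Fin 4, ((1 + ρ * β i ^ 2 / (8 * Real.sin α ^ 2)) ^ 2)⁻¹)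
      (volume.restrict (Set.Ioc (0:ℝ) (π/2))) := by
    intro ρ
    apply Measurable.aestronglyMeasurable
    fun_prop
  have hCpos : 0 < C := by
    refine mul_pos (by norm_num) (Finset.prod_pos fun i _ => hβ4 i)
  -- uniform bound
  have hbound : ∀ᶠ ρ in atTop, ∀ᵐ α ∂(volume.restrict (Set.Ioc (0:ℝ) (π/2))),
      ‖ρ ^ 8 * ∏ i : Fin 4, ((1 + ρ * β i ^ 2 / (8 * Real.sin α ^ 2)) ^ 2)⁻¹‖ ≤ C := by
    filter_upwards [eventually_gt_atTop (0:ℝ)] with ρ hρ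
    rw [ae_restrict_iff' measurableSet_Ioc]
    refine ae_of_all _ fun α hα => ?_
    have hs := hsin α hα
    rw [key ρ hρ α hα, Real.norm_eq_abs,
      abs_of_nonneg (Finset.prod_nonneg fun i _ => by positivity)]
    have step1 : ∏ i : Fin 4, ((ρ⁻¹ + β i ^ 2 / (8 * Real.sin α ^ 2)) ^ 2)⁻¹
        ≤ ∏ i : Fin 4, ((β i ^ 2 / (8 * Real.sin α ^ 2)) ^ 2)⁻¹ := by
      refine Finset.prod_le_prod (fun i _ => by positivity) fun i _ => ?_
      have hc : 0 < β i ^ 2 / (8 * Real.sin α ^ 2) := by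
        have := hβ2 i; positivity
      have hρi : 0 < ρ⁻¹ := inv_pos.mpr hρ
      have hpos : 0 < (β i ^ 2 / (8 * Real.sin α ^ 2)) ^ 2 := by positivity
      apply inv_anti₀ hpos
      nlinarith
    have step2 : (∏ i : Fin 4, ((β i ^ 2 / (8 * Real.sin α ^ 2)) ^ 2)⁻¹) ≤ C := by
      rw [prodid α hs]
      have h1 : Real.sin α ^ 16 ≤ 1 := pow_le_one₀ (le_of_lt hs) (Real.sin_le_one α)
      calc C * Real.sin α ^ 16 ≤ C * 1 := by
            exact mul_le_mul_of_nonneg_left h1 (le_of_lt hCpos)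
        _ = C := mul_one C
    exact le_trans step1 step2
  -- dominated convergence
  have hmain : Tendsto (fun ρ : ℝ => ∫ α in Set.Ioc (0:ℝ) (π/2),
      ρ ^ 8 * ∏ i : Fin 4, ((1 + ρ * β i ^ 2 / (8 * Real.sin α ^ 2)) ^ 2)⁻¹)
      atTop (nhds (∫ α in Set.Ioc (0:ℝ) (π/2), f α)) := by
    refine tendsto_integral_filter_of_dominated_convergence (fun _ => C)
      (Eventually.of_forall hmeas) hbound ?_ ?_
    · exact integrableOn_const measure_Ioc_lt_top.ne
    · rw [ae_restrict_iff' measurableSet_Ioc]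
      exact ae_of_all _ hlim
  -- identify the limit value
  have hInt : (∫ α in Set.Ioc (0:ℝ) (π/2), f α)
      = C * ∫ α in (0:ℝ)..(π/2), Real.sin α ^ 16 := by
    rw [intervalIntegral.integral_of_le hle]
    exact integral_const_mul C _
  have hfinal := hmain.const_mul (1/π)
  rw [hInt] at hfinal
  have hval : (1/π) * (C * ∫ α in (0:ℝ)..(π/2), Real.sin α ^ 16)
      = (2 ^ 24 / π) * (∫ α in (0:ℝ)..(π/2), Real.sin α ^ 16) *
        ∏ i : Fin 4, (β i ^ 4)⁻¹ := by
    rw [hC]; ring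
  rw [hval] at hfinal
  refine hfinal.congr fun ρ => ?_
  rw [intervalIntegral.integral_of_le hle, integral_const_mul]
  ring
end
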